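/- Let 1/2 < α < 1 and let w ∈ ℝ with w ≠ 0. With CE(w, b) = −(1/2)·(∫_{−1}^{0} log(exp(w·x + b)/(exp(w·x + b) + 1)) dx + ∫_{0}^{α} log(1/(exp(w·x + b) + 1)) dx + ∫_{α}^{1} log(exp(w·x + b)/(exp(w·x + b) + 1)) dx), the function b ↦ CE(w, b) is differentiable at b = 0 and its derivative there equals (α − 1)/2; in particular this derivative is nonzero. -/

import Mathlib

noncomputable def CE (α w b : ℝ) : ℝ :=
  -(1 / 2) *
    ((∫ x in (-1 : ℝ)..0,
        Real.log (Real.exp (w * x + b) / (Real.exp (w * x + b) + 1)))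
      + (∫ x in (0 : ℝ)..α, Real.log (1 / (Real.exp (w * x + b) + 1)))
      + (∫ x in α..(1 : ℝ),
          Real.log (Real.exp (w * x + b) / (Real.exp (w * x + b) + 1))))

noncomputable def Gfun (t : ℝ) : ℝ := ∫ u in (0:ℝ)..t, Real.log (Real.exp u + 1)

lemma contF : Continuous fun u : ℝ => Real.log (Real.exp u + 1) :=
  (Real.continuous_exp.add continuous_const).log (fun x => (add_pos (Real.exp_pos x) one_pos).ne')

lemma hG (t : ℝ) : HasDerivAt Gfun (Real.log (Real.exp t + 1)) t :=
  intervalIntegral.integral_hasDerivAt_right (contF.intervalIntegrable _ _)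
    (contF.stronglyMeasurableAtFilter _ _) contF.continuousAt

lemma int_f (a c b w : ℝ) (hw : w ≠ 0) :
    (∫ x in a..c, Real.log (Real.exp (w * x + b) + 1))
      = w⁻¹ * (Gfun (w * c + b) - Gfun (w * a + b)) := by
  rw [intervalIntegral.integral_comp_mul_add (fun u => Real.log (Real.exp u + 1)) hw b]
  have : (∫ u in (w*a+b)..(w*c+b), Real.log (Real.exp u + 1))
      = Gfun (w*c+b) - Gfun (w*a+b) := by
    rw [Gfun, Gfun, intervalIntegral.integral_interval_sub_left
      (contF.intervalIntegrable _ _) (contF.intervalIntegrable _ _)]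
  rw [this, smul_eq_mul]

lemma int_lin (a c b w : ℝ) :
    (∫ x in a..c, (w * x + b)) = w * (c^2 - a^2) / 2 + b * (c - a) := by
  rw [intervalIntegral.integral_add (f := fun x => w * x) (g := fun _ => b)
      ((continuous_const.mul continuous_id).intervalIntegrable _ _) intervalIntegrable_const,
    intervalIntegral.integral_const_mul, integral_id, intervalIntegral.integral_const,
    smul_eq_mul]
  ring

lemma ce_closed (α w : ℝ) (hw : w ≠ 0) (b : ℝ) :
    CE α w b = -(1/2) * ((b - w/2) + (w * (1 - α^2) / 2 + b * (1 - α))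
      - w⁻¹ * (Gfun (w + b) - Gfun (b - w))) := by
  have key : ∀ u : ℝ, Real.log (Real.exp u / (Real.exp u + 1))
      = u - Real.log (Real.exp u + 1) := fun u => by
    rw [Real.log_div (Real.exp_pos u).ne' (by positivity), Real.log_exp]
  have key2 : ∀ u : ℝ, Real.log (1 / (Real.exp u + 1))
      = -Real.log (Real.exp u + 1) := fun u => by
    rw [one_div, Real.log_inv]
  have hlin : Continuous fun x : ℝ => w * x + b :=
    (continuous_const.mul continuous_id).add continuous_const
  have hc : Continuous fun x : ℝ => Real.log (Real.exp (w * x + b) + 1) := contF.comp hlin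
  have split : ∀ a c : ℝ, (∫ x in a..c, Real.log (Real.exp (w*x+b) / (Real.exp (w*x+b) + 1)))
      = (∫ x in a..c, (w*x+b)) - (∫ x in a..c, Real.log (Real.exp (w*x+b) + 1)) := by
    intro a c
    rw [← intervalIntegral.integral_sub (hlin.intervalIntegrable _ _) (hc.intervalIntegrable _ _)]
    simp_rw [key]
  have neg : (∫ x in (0:ℝ)..α, Real.log (1 / (Real.exp (w*x+b) + 1)))
      = -(∫ x in (0:ℝ)..α, Real.log (Real.exp (w*x+b) + 1)) := by
    rw [← intervalIntegral.integral_neg]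
    simp_rw [key2]
  rw [CE, split, split, neg, int_lin, int_lin, int_f _ _ _ _ hw, int_f _ _ _ _ hw,
    int_f _ _ _ _ hw]
  ring

theorem CE_deriv_at_zero_nonzero (α : ℝ) (hα₁ : 1 / 2 < α) (hα₂ : α < 1)
    (w : ℝ) (hw : w ≠ 0) :
    HasDerivAt (fun b : ℝ => CE α w b) ((α - 1) / 2) 0 ∧ (α - 1) / 2 ≠ 0 := by
  constructor
  · have h1 : HasDerivAt (fun b : ℝ => Gfun (w + b)) (Real.log (Real.exp (w + 0) + 1)) 0 := by
      simpa [Function.comp_def] using (hG (w + 0)).comp 0 ((hasDerivAt_id 0).const_add w)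
    have h2 : HasDerivAt (fun b : ℝ => Gfun (b - w)) (Real.log (Real.exp (0 - w) + 1)) 0 := by
      simpa [Function.comp_def] using (hG (0 - w)).comp 0 ((hasDerivAt_id 0).sub_const w)
    have h3 : HasDerivAt (fun b : ℝ => -(1/2) * ((b - w/2) + (w * (1 - α^2) / 2 + b * (1 - α))
        - w⁻¹ * (Gfun (w + b) - Gfun (b - w))))
        (-(1/2) * ((1 + 1 * (1 - α))
          - w⁻¹ * (Real.log (Real.exp (w + 0) + 1) - Real.log (Real.exp (0 - w) + 1)))) 0 := by
      exact ((((hasDerivAt_id 0).sub_const (w/2)).add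
        (((hasDerivAt_id 0).mul_const (1 - α)).const_add (w * (1 - α^2) / 2))).sub
        ((h1.sub h2).const_mul w⁻¹)).const_mul (-(1/2))
    have hlog : Real.log (Real.exp (w + 0) + 1) - Real.log (Real.exp (0 - w) + 1) = w := by
      have hpos : (0:ℝ) < Real.exp (-w) + 1 := by positivity
      have hfac : Real.exp w + 1 = Real.exp w * (Real.exp (-w) + 1) := by
        rw [mul_add, ← Real.exp_add, add_neg_cancel, Real.exp_zero, mul_one, add_comm]
      rw [add_zero, zero_sub, hfac, Real.log_mul (Real.exp_pos w).ne' hpos.ne', Real.log_exp]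
      ring
    have h4 := h3
    rw [hlog] at h4
    have heq : -(1/2) * ((1 + 1 * (1 - α)) - w⁻¹ * w) = (α - 1) / 2 := by
      rw [inv_mul_cancel₀ hw]
      ring
    rw [heq] at h4
    have : (fun b : ℝ => CE α w b) = fun b : ℝ => -(1/2) * ((b - w/2)
        + (w * (1 - α^2) / 2 + b * (1 - α)) - w⁻¹ * (Gfun (w + b) - Gfun (b - w))) :=
      funext (ce_closed α w hw)
    rw [this]
    exact h4
  · have : α - 1 < 0 := by linarith
    intro h
    have : α - 1 = 0 := by linarith [div_eq_zero_iff.mp h]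
    linarith
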